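/- For every p ≥ 1, (1/π) ∫_{-∞}^{∞} (sin²t / t²)^p dt ≤ (1 + (1/√(3π)) · (√5/6)^{2p-1} / (√p - 1/(2√p))) · √(3/π) / √p. -/

import Mathlib

open MeasureTheory Real

/-- `(sin t / t)^2`, extended continuously by `1` at `t = 0`. -/
noncomputable def sinc2 (t : ℝ) : ℝ := if t = 0 then 1 else Real.sin t ^ 2 / t ^ 2

open Set Filter

private lemma aux1 : ∀ x ∈ Icc (0:ℝ) π, 0 ≤ Real.sin x - x * Real.cos x := by
  have hder : ∀ x : ℝ, HasDerivAt (fun y => Real.sin y - y * Real.cos y) (x * Real.sin x) x := by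
    intro x
    have h := (Real.hasDerivAt_sin x).sub ((hasDerivAt_id x).mul (Real.hasDerivAt_cos x))
    refine h.congr_deriv ?_
    simp only [id]; ring
  have hmono : MonotoneOn (fun y => Real.sin y - y * Real.cos y) (Icc 0 π) := by
    apply monotoneOn_of_deriv_nonneg (convex_Icc 0 π)
    · exact (Real.continuous_sin.sub (continuous_id.mul Real.continuous_cos)).continuousOn
    · intro x _
      exact (hder x).differentiableAt.differentiableWithinAt
    · intro x hx
      rw [interior_Icc] at hx
      rw [(hder x).deriv]
      exact mul_nonneg hx.1.le (Real.sin_nonneg_of_nonneg_of_le_pi hx.1.le hx.2.le)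
  intro x hx
  have h0 : (0:ℝ) ∈ Icc (0:ℝ) π := ⟨le_refl 0, Real.pi_pos.le⟩
  have := hmono h0 hx hx.1
  simpa using this

private lemma aux2 : ∀ x ∈ Icc (0:ℝ) π,
    0 ≤ 3 * Real.sin x - 3 * (x * Real.cos x) - x ^ 2 * Real.sin x := by
  have hder : ∀ x : ℝ, HasDerivAt
      (fun y => 3 * Real.sin y - 3 * (y * Real.cos y) - y ^ 2 * Real.sin y)
      (x * (Real.sin x - x * Real.cos x)) x := by
    intro x
    have h := (((Real.hasDerivAt_sin x).const_mul 3).sub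
        (((hasDerivAt_id x).mul (Real.hasDerivAt_cos x)).const_mul 3)).sub
        ((hasDerivAt_pow 2 x).mul (Real.hasDerivAt_sin x))
    refine h.congr_deriv ?_
    simp only [id]; ring
  have hmono : MonotoneOn
      (fun y => 3 * Real.sin y - 3 * (y * Real.cos y) - y ^ 2 * Real.sin y) (Icc 0 π) := by
    apply monotoneOn_of_deriv_nonneg (convex_Icc 0 π)
    · fun_prop
    · intro x _
      exact (hder x).differentiableAt.differentiableWithinAt
    · intro x hx
      rw [interior_Icc] at hx
      rw [(hder x).deriv]
      exact mul_nonneg hx.1.le (aux1 x ⟨hx.1.le, hx.2.le⟩)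
  intro x hx
  have h0 : (0:ℝ) ∈ Icc (0:ℝ) π := ⟨le_refl 0, Real.pi_pos.le⟩
  have := hmono h0 hx hx.1
  simpa using this

private noncomputable def Fb (y : ℝ) : ℝ := Real.log y - Real.log (Real.sin y) - y ^ 2 / 6

private lemma hasDerivAt_Fb {y : ℝ} (hy : y ∈ Ioo (0:ℝ) π) :
    HasDerivAt Fb (y⁻¹ - (Real.sin y)⁻¹ * Real.cos y - 2 * y / 6) y := by
  have hsy : 0 < Real.sin y := Real.sin_pos_of_pos_of_lt_pi hy.1 hy.2
  have h1 := Real.hasDerivAt_log hy.1.ne'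
  have h2 : HasDerivAt (fun z => Real.log (Real.sin z)) ((Real.sin y)⁻¹ * Real.cos y) y := by
    have := (Real.hasDerivAt_log hsy.ne').comp y (Real.hasDerivAt_sin y)
    exact this
  have h3 : HasDerivAt (fun z : ℝ => z ^ 2 / 6) (2 * y / 6) y := by
    have := (hasDerivAt_pow 2 y).div_const 6
    refine this.congr_deriv ?_
    norm_num
  exact (h1.sub h2).sub h3

private lemma Fb_mono : MonotoneOn Fb (Ioo 0 π) := by
  apply monotoneOn_of_deriv_nonneg (convex_Ioo 0 π)
  · intro y hy
    exact (hasDerivAt_Fb hy).continuousAt.continuousWithinAt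
  · rw [interior_Ioo]
    intro y hy
    exact (hasDerivAt_Fb hy).differentiableAt.differentiableWithinAt
  · rw [interior_Ioo]
    intro y hy
    rw [(hasDerivAt_Fb hy).deriv]
    have hsy : 0 < Real.sin y := Real.sin_pos_of_pos_of_lt_pi hy.1 hy.2
    have key := aux2 y ⟨hy.1.le, hy.2.le⟩
    have heq : y⁻¹ - (Real.sin y)⁻¹ * Real.cos y - 2 * y / 6
        = (3 * Real.sin y - 3 * (y * Real.cos y) - y ^ 2 * Real.sin y) / (3 * y * Real.sin y) := by
      have hy0 : y ≠ 0 := hy.1.ne'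
      have hsy0 : Real.sin y ≠ 0 := hsy.ne'
      field_simp
      ring
    rw [heq]
    have hden : (0:ℝ) < 3 * y * Real.sin y :=
      mul_pos (mul_pos (by norm_num) hy.1) hsy
    exact div_nonneg key hden.le

private lemma Fb_tendsto : Tendsto Fb (nhdsWithin 0 (Ioi 0)) (nhds 0) := by
  have hslope : Tendsto (fun y : ℝ => Real.sin y / y) (nhdsWithin 0 {(0:ℝ)}ᶜ) (nhds 1) := by
    have h := Real.hasDerivAt_sin 0
    rw [hasDerivAt_iff_tendsto_slope] at h
    rw [Real.cos_zero] at h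
    refine h.congr (fun y => ?_)
    simp [slope_def_field]
  have hslope' : Tendsto (fun y : ℝ => Real.sin y / y) (nhdsWithin 0 (Ioi 0)) (nhds 1) :=
    hslope.mono_left (nhdsWithin_mono 0 (fun y hy => ne_of_gt hy))
  have hlog : Tendsto (fun y : ℝ => Real.log (Real.sin y / y)) (nhdsWithin 0 (Ioi 0)) (nhds 0) := by
    have := (Real.continuousAt_log one_ne_zero).tendsto.comp hslope'
    simpa [Function.comp_def] using this
  have hsq : Tendsto (fun y : ℝ => y ^ 2 / 6) (nhdsWithin 0 (Ioi 0)) (nhds 0) := by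
    have : Tendsto (fun y : ℝ => y ^ 2 / 6) (nhds 0) (nhds 0) := by
      have := ((continuous_pow 2).div_const (6:ℝ)).tendsto (0:ℝ)
      simpa using this
    exact this.mono_left nhdsWithin_le_nhds
  have hG : Tendsto (fun y : ℝ => -(Real.log (Real.sin y / y)) - y ^ 2 / 6)
      (nhdsWithin 0 (Ioi 0)) (nhds 0) := by
    have := hlog.neg.sub hsq
    simpa using this
  have hev : (fun y : ℝ => -(Real.log (Real.sin y / y)) - y ^ 2 / 6) =ᶠ[nhdsWithin 0 (Ioi 0)] Fb := by
    filter_upwards [Ioo_mem_nhdsGT_of_mem (⟨le_refl (0:ℝ), Real.pi_pos⟩ : (0:ℝ) ∈ Ico (0:ℝ) π)]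
      with y hy
    have hsy : 0 < Real.sin y := Real.sin_pos_of_pos_of_lt_pi hy.1 hy.2
    unfold Fb
    rw [Real.log_div hsy.ne' hy.1.ne']
    ring
  exact hG.congr' hev

private lemma aux3 {x : ℝ} (hx0 : 0 < x) (hxπ : x < π) :
    Real.sin x ≤ x * Real.exp (-(x ^ 2) / 6) := by
  have hsx : 0 < Real.sin x := Real.sin_pos_of_pos_of_lt_pi hx0 hxπ
  have hxF : 0 ≤ Fb x := by
    refine le_of_tendsto Fb_tendsto ?_
    filter_upwards [Ioo_mem_nhdsGT_of_mem (⟨le_refl (0:ℝ), hx0⟩ : (0:ℝ) ∈ Ico (0:ℝ) x)]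
      with y hy
    exact Fb_mono ⟨hy.1, hy.2.trans hxπ⟩ ⟨hx0, hxπ⟩ hy.2.le
  have hlog : x ^ 2 / 6 ≤ Real.log (x / Real.sin x) := by
    rw [Real.log_div hx0.ne' hsx.ne']
    unfold Fb at hxF
    linarith
  have h1 : Real.exp (x ^ 2 / 6) ≤ x / Real.sin x := by
    calc Real.exp (x ^ 2 / 6) ≤ Real.exp (Real.log (x / Real.sin x)) := Real.exp_le_exp.mpr hlog
      _ = x / Real.sin x := Real.exp_log (by positivity)
  have h2 : Real.sin x * Real.exp (x ^ 2 / 6) ≤ x := by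
    have := (le_div_iff₀ hsx).mp h1
    linarith [this]
  have h3 : x * Real.exp (-(x ^ 2) / 6) = x / Real.exp (x ^ 2 / 6) := by
    rw [neg_div, Real.exp_neg]; ring
  rw [h3, le_div_iff₀ (Real.exp_pos _)]
  linarith [h2]

private lemma sinc2_nonneg (t : ℝ) : 0 ≤ sinc2 t := by
  unfold sinc2
  split
  · norm_num
  · positivity

private lemma sinc2_le_exp {t : ℝ} (ht : |t| ≤ 6 / Real.sqrt 5) :
    sinc2 t ≤ Real.exp (-(t ^ 2) / 3) := by
  rcases eq_or_ne t 0 with h0 | h0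
  · simp [sinc2, h0]
  · have hs5 : (2:ℝ) < Real.sqrt 5 := by
      have h4 : (2:ℝ) = Real.sqrt 4 := by
        rw [show (4:ℝ) = 2 ^ 2 by norm_num, Real.sqrt_sq (by norm_num : (0:ℝ) ≤ 2)]
      rw [h4]
      exact Real.sqrt_lt_sqrt (by norm_num) (by norm_num)
    have hπ : 6 / Real.sqrt 5 < π := by
      have h3 : 6 / Real.sqrt 5 < 3 := by
        rw [div_lt_iff₀ (by positivity)]
        nlinarith
      linarith [Real.pi_gt_three]
    have hx0 : 0 < |t| := abs_pos.mpr h0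
    have hxπ : |t| < π := lt_of_le_of_lt ht hπ
    have key := aux3 hx0 hxπ
    have hsin : Real.sin |t| ^ 2 = Real.sin t ^ 2 := by
      rcases abs_choice t with h | h
      · rw [h]
      · rw [h, Real.sin_neg, neg_sq]
    have hnn : 0 ≤ Real.sin |t| := Real.sin_nonneg_of_nonneg_of_le_pi (abs_nonneg t) hxπ.le
    have hsq : Real.sin t ^ 2 ≤ t ^ 2 * Real.exp (-(t ^ 2) / 3) := by
      have h2 := pow_le_pow_left₀ hnn key 2
      have hexp : (Real.exp (-(|t| ^ 2) / 6)) ^ 2 = Real.exp (-(t ^ 2) / 3) := by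
        rw [sq, ← Real.exp_add, sq_abs]
        congr 1
        ring
      calc Real.sin t ^ 2 = Real.sin |t| ^ 2 := hsin.symm
        _ ≤ (|t| * Real.exp (-(|t| ^ 2) / 6)) ^ 2 := h2
        _ = t ^ 2 * Real.exp (-(t ^ 2) / 3) := by rw [mul_pow, hexp, sq_abs]
    rw [sinc2, if_neg h0, div_le_iff₀ (by positivity : (0:ℝ) < t ^ 2)]
    rw [mul_comm]
    exact hsq

theorem improved_ball_inequality (p : ℝ) (hp : 1 ≤ p) :
    (1 / π) * ∫ t : ℝ, sinc2 t ^ p ≤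
      (1 + (1 / Real.sqrt (3 * π)) *
          (Real.sqrt 5 / 6) ^ (2 * p - 1) / (Real.sqrt p - 1 / (2 * Real.sqrt p))) *
        Real.sqrt (3 / π) / Real.sqrt p := by
  have hp0 : 0 < p := lt_of_lt_of_le one_pos hp
  set a : ℝ := 6 / Real.sqrt 5 with ha_def
  have ha0 : 0 < a := by positivity
  have hep : -(2 * p) < -1 := by linarith
  set k : ℝ → ℝ := (Ioi a).indicator (fun t => t ^ (-(2 * p))) with hk_def
  have hk_int : Integrable k :=
    (integrableOn_Ioi_rpow_of_lt hep ha0).integrable_indicator measurableSet_Ioi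
  have hk_nonneg : ∀ t, 0 ≤ k t := by
    intro t
    apply Set.indicator_nonneg
    intro x hx
    exact Real.rpow_nonneg (le_of_lt (lt_trans ha0 hx)) _
  set g : ℝ → ℝ := fun t => Real.exp (-(p / 3) * t ^ 2) + (k t + k (-t)) with hg_def
  have hg_int : Integrable g :=
    (integrable_exp_neg_mul_sq (by positivity)).add (hk_int.add hk_int.comp_neg)
  have hf_nonneg : ∀ t, 0 ≤ sinc2 t ^ p := fun t => Real.rpow_nonneg (sinc2_nonneg t) p
  have hbound : ∀ t, sinc2 t ^ p ≤ g t := by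
    intro t
    rcases le_or_gt |t| a with hle | hgt
    · have h1 : sinc2 t ^ p ≤ Real.exp (-(t ^ 2) / 3) ^ p :=
        Real.rpow_le_rpow (sinc2_nonneg t) (sinc2_le_exp hle) hp0.le
      have h2 : Real.exp (-(t ^ 2) / 3) ^ p = Real.exp (-(p / 3) * t ^ 2) := by
        rw [← Real.exp_mul]
        congr 1
        ring
      have hk1 := hk_nonneg t
      have hk2 := hk_nonneg (-t)
      simp only [hg_def]
      rw [h2] at h1
      linarith
    · have ht0 : 0 < |t| := lt_trans ha0 hgt
      have htne : t ≠ 0 := by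
        intro h
        rw [h] at ht0
        simp at ht0
      have hs : sinc2 t ≤ |t| ^ (-(2:ℝ)) := by
        rw [sinc2, if_neg htne, Real.rpow_neg (abs_nonneg t)]
        have h2 : |t| ^ (2:ℝ) = t ^ 2 := by
          rw [show ((2:ℝ)) = ((2:ℕ):ℝ) by norm_num, Real.rpow_natCast, sq_abs]
        rw [h2, inv_eq_one_div]
        gcongr
        exact Real.sin_sq_le_one t
      have h1 : sinc2 t ^ p ≤ (|t| ^ (-(2:ℝ))) ^ p :=
        Real.rpow_le_rpow (sinc2_nonneg t) hs hp0.le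
      have h2 : (|t| ^ (-(2:ℝ))) ^ p = |t| ^ (-(2 * p)) := by
        rw [← Real.rpow_mul (abs_nonneg t)]
        congr 1
        ring
      have h3 : |t| ^ (-(2 * p)) ≤ k t + k (-t) := by
        rcases le_or_gt t 0 with hts | hts
        · have habs : |t| = -t := abs_of_nonpos hts
          have hmem : -t ∈ Ioi a := by
            rw [mem_Ioi, ← habs]
            exact hgt
          have hkt : k (-t) = |t| ^ (-(2 * p)) := by
            rw [hk_def, Set.indicator_of_mem hmem, habs]
          linarith [hk_nonneg t, hkt.ge, hkt.le]
        · have habs : |t| = t := abs_of_pos hts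
          have hmem : t ∈ Ioi a := by
            rw [mem_Ioi, ← habs]
            exact hgt
          have hkt : k t = |t| ^ (-(2 * p)) := by
            rw [hk_def, Set.indicator_of_mem hmem, habs]
          linarith [hk_nonneg (-t), hkt.ge, hkt.le]
      have h4 : k t + k (-t) ≤ g t := by
        simp only [hg_def]
        have := Real.exp_pos (-(p / 3) * t ^ 2)
        linarith
      calc sinc2 t ^ p ≤ |t| ^ (-(2 * p)) := h1.trans_eq h2
        _ ≤ k t + k (-t) := h3
        _ ≤ g t := h4
  have hm : Measurable sinc2 := by
    unfold sinc2
    apply Measurable.ite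
    · have : {t : ℝ | t = 0} = {0} := by ext; simp
      rw [this]
      exact measurableSet_singleton 0
    · exact measurable_const
    · exact (Real.measurable_sin.pow_const 2).div (measurable_id.pow_const 2)
  have hf_meas : Measurable (fun t => sinc2 t ^ p) := by fun_prop
  have hf_int : Integrable (fun t => sinc2 t ^ p) := by
    apply hg_int.mono' hf_meas.aestronglyMeasurable
    filter_upwards with t
    rw [Real.norm_eq_abs, abs_of_nonneg (hf_nonneg t)]
    exact hbound t
  have hI : ∫ t, sinc2 t ^ p ≤ ∫ t, g t := integral_mono hf_int hg_int hbound
  have hkval : ∫ t, k t = a ^ (-(2 * p - 1)) / (2 * p - 1) := by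
    rw [hk_def, integral_indicator measurableSet_Ioi, integral_Ioi_rpow_of_lt hep ha0,
      show -(2 * p) + 1 = -(2 * p - 1) by ring, neg_div_neg_eq]
  have hgeval : ∫ t, g t = Real.sqrt (π / (p / 3)) + 2 * (a ^ (-(2 * p - 1)) / (2 * p - 1)) := by
    have hneg_int : Integrable (fun t => k (-t)) := hk_int.comp_neg
    have hsum_int : Integrable (fun t => k t + k (-t)) := hk_int.add hneg_int
    simp only [hg_def]
    rw [integral_add (integrable_exp_neg_mul_sq (by positivity)) hsum_int,
      integral_add hk_int hneg_int, integral_neg_eq_self, integral_gaussian, hkval]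
    ring
  set X : ℝ := (Real.sqrt 5 / 6) ^ (2 * p - 1) with hX_def
  have haX : a ^ (-(2 * p - 1)) = X := by
    rw [Real.rpow_neg ha0.le, ← Real.inv_rpow ha0.le, hX_def]
    congr 1
    rw [ha_def, inv_div]
  have hX0 : 0 ≤ X := Real.rpow_nonneg (by positivity) _
  -- arithmetic finish
  have hsp : Real.sqrt p ^ 2 = p := Real.sq_sqrt hp0.le
  have hsπ : Real.sqrt π ^ 2 = π := Real.sq_sqrt Real.pi_pos.le
  have hsp1 : 1 ≤ Real.sqrt p := by
    rw [show (1:ℝ) = Real.sqrt 1 by simp]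
    exact Real.sqrt_le_sqrt hp
  have hsp0 : 0 < Real.sqrt p := lt_of_lt_of_le one_pos hsp1
  have hsπ0 : 0 < Real.sqrt π := Real.sqrt_pos.mpr Real.pi_pos
  have hs30 : 0 < Real.sqrt 3 := Real.sqrt_pos.mpr (by norm_num)
  have hgauss : Real.sqrt (π / (p / 3)) = Real.sqrt 3 * Real.sqrt π / Real.sqrt p := by
    rw [show π / (p / 3) = 3 * π / p by field_simp; try ring, Real.sqrt_div (by positivity) p,
      Real.sqrt_mul (by norm_num : (0:ℝ) ≤ 3) π]
  have key : (1 / π) * (Real.sqrt (π / (p / 3)) + 2 * (a ^ (-(2 * p - 1)) / (2 * p - 1))) =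
      (1 + (1 / Real.sqrt (3 * π)) * X / (Real.sqrt p - 1 / (2 * Real.sqrt p))) *
        Real.sqrt (3 / π) / Real.sqrt p := by
    rw [haX, hgauss, Real.sqrt_mul (by norm_num : (0:ℝ) ≤ 3) π,
      Real.sqrt_div (by norm_num : (0:ℝ) ≤ 3) π]
    set s3 := Real.sqrt 3 with hs3_def
    set sπ := Real.sqrt π with hsπ_def
    set sp := Real.sqrt p with hsp_def
    have h2p : 2 * sp ^ 2 - 1 ≠ 0 := by nlinarith
    have hdpos : 0 < sp - 1 / (2 * sp) := by
      rw [sub_pos, div_lt_iff₀ (by positivity)]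
      nlinarith
    have hd : sp - 1 / (2 * sp) ≠ 0 := hdpos.ne'
    have hden : sp - 1 / (2 * sp) = (2 * sp ^ 2 - 1) / (2 * sp) := by
      field_simp
    rw [← hsp, ← hsπ, hden]
    field_simp [hs30.ne', hsπ0.ne', hsp0.ne', h2p]
  have hπpos := Real.pi_pos
  calc (1 / π) * ∫ t : ℝ, sinc2 t ^ p
      ≤ (1 / π) * (Real.sqrt (π / (p / 3)) + 2 * (a ^ (-(2 * p - 1)) / (2 * p - 1))) := by
        rw [← hgeval]
        exact mul_le_mul_of_nonneg_left hI (by positivity)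
    _ = _ := key
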